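/- arXiv:1908.07361 — 2 statements merged into one kernel-verified Lean document; each statement's English description precedes it below -/
import Mathlib

section
/- For every integer m ≥ 2, the Misiurewicz polynomial G_{2,m,2}(c) is irreducible over ℚ. -/
set_option synthInstance.maxHeartbeats 1000000
set_option maxHeartbeats 1000000
set_option linter.unreachableTactic false
set_option linter.unusedTactic false


open Polynomial

noncomputable section

/-- `critPoly d i` is `f_{c,d}^i(0)` as a polynomial in the variable `c` over `ℤ`,
where `f_{c,d}(x) = x^d + c`. -/
def critPoly (d : ℕ) : ℕ → Polynomial ℤ
  | 0 => 0
  | i + 1 => critPoly d i ^ d + X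

/-- The field of rational functions in `c` over `ℚ`, realized as the fraction field of `ℤ[c]`. -/
abbrev RF : Type := FractionRing (Polynomial ℤ)

/-- The natural inclusion `ℤ[c] → ℚ(c)`. -/
def toRF (p : Polynomial ℤ) : RF := algebraMap (Polynomial ℤ) RF p

/-- `G_{d,0,n} = ∏_{k ∣ n} (f_{c,d}^k(0))^{μ(n/k)}` as a rational function. -/
def G0Rat (d n : ℕ) : RF :=
  ∏ k ∈ n.divisors, toRF (critPoly d k) ^ (ArithmeticFunction.moebius (n / k))

/-- `F_{d,m,n}` as a rational function. -/
def FRat (d m n : ℕ) : RF :=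
  ∏ k ∈ n.divisors,
    ((toRF (critPoly d (m + k)) - toRF (critPoly d m)) /
      (toRF (critPoly d (m - 1 + k)) - toRF (critPoly d (m - 1)))) ^
      (ArithmeticFunction.moebius (n / k))

/-- `G_{d,m,n}` (for `m ≥ 2`) as a rational function. -/
def GRat (d m n : ℕ) : RF :=
  if n ∣ m - 1 then FRat d m n / FRat d 1 n else FRat d m n

/-- `G : ℤ[c]` is the Misiurewicz polynomial `G_{d,m,n}` (for `m ≥ 2`). -/
def IsMisiurewicz (d m n : ℕ) (G : Polynomial ℤ) : Prop := toRF G = GRat d m n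

/-- `G0 : ℤ[c]` is the polynomial `G_{d,0,n}`. -/
def IsG0 (d n : ℕ) (G0 : Polynomial ℤ) : Prop := toRF G0 = G0Rat d n


lemma critPoly_succ (i : ℕ) : critPoly 2 (i+1) = critPoly 2 i ^ 2 + X := rfl

lemma critPoly_monic_natDegree (i : ℕ) :
    (critPoly 2 (i+1)).Monic ∧ (critPoly 2 (i+1)).natDegree = 2 ^ i := by
  induction i with
  | zero =>
    constructor <;> simp [critPoly]
  | succ n ih =>
    obtain ⟨hmon, hdeg⟩ := ih
    have hsq : ((critPoly 2 (n+1)) ^ 2).Monic := hmon.pow 2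
    have hsqdeg : ((critPoly 2 (n+1)) ^ 2).natDegree = 2 ^ (n+1) := by
      rw [natDegree_pow, hdeg]; ring
    have hlt : (X : Polynomial ℤ).degree < ((critPoly 2 (n+1)) ^ 2).degree := by
      rw [degree_X, degree_eq_natDegree hsq.ne_zero, hsqdeg]
      exact_mod_cast Nat.one_lt_two_pow (by omega)
    constructor
    · exact hsq.add_of_left hlt
    · rw [critPoly_succ, natDegree_add_eq_left_of_degree_lt hlt, hsqdeg]

lemma critPoly_monic (i : ℕ) : (critPoly 2 (i+1)).Monic := (critPoly_monic_natDegree i).1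
lemma critPoly_natDegree (i : ℕ) : (critPoly 2 (i+1)).natDegree = 2 ^ i :=
  (critPoly_monic_natDegree i).2

lemma crit_ne {i j : ℕ} (h : i < j) : critPoly 2 j ≠ critPoly 2 i := by
  obtain ⟨j', rfl⟩ : ∃ j', j = j'+1 := ⟨j-1, by omega⟩
  intro hE
  match i, h with
  | 0, _ =>
    exact (critPoly_monic j').ne_zero (by simpa [critPoly] using hE)
  | (i'+1), h =>
    have := congrArg natDegree hE
    rw [critPoly_natDegree, critPoly_natDegree] at this
    have := Nat.pow_right_injective (le_refl 2) this
    omega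

lemma crit_ne_neg {i j : ℕ} (h : i < j) : critPoly 2 j ≠ -critPoly 2 i := by
  obtain ⟨j', rfl⟩ : ∃ j', j = j'+1 := ⟨j-1, by omega⟩
  intro hE
  match i, h with
  | 0, _ =>
    exact (critPoly_monic j').ne_zero (by simpa [critPoly] using hE)
  | (i'+1), h =>
    have := congrArg natDegree hE
    rw [critPoly_natDegree, natDegree_neg, critPoly_natDegree] at this
    have := Nat.pow_right_injective (le_refl 2) this
    omega


lemma toRF_inj : Function.Injective toRF :=
  IsFractionRing.injective (Polynomial ℤ) RF

lemma toRF_ne {p q : Polynomial ℤ} (h : p ≠ q) : toRF p ≠ toRF q := fun he => h (toRF_inj he)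

lemma field_calc {K : Type} [Field K] (a b c d t : K)
    (hb : b = a^2 + t) (hc : c = b^2 + t) (hd : d = c^2 + t)
    (h1 : b - a ≠ 0) (h2 : c - a ≠ 0) (h3 : c - b ≠ 0) :
    ((c-b)/(b-a))⁻¹ * ((d-b)/(c-a)) = b - a + 1 := by
  have e1 : c - b = (b - a) * (b + a) := by subst hc hb; ring
  have e2 : d - b = (c - a) * ((b + a) * (b - a + 1)) := by
    have e3 : c + a = (b + a) * (b - a + 1) := by subst hc hb; ring
    have : d - b = (c - a) * (c + a) := by subst hd hb; ring
    rw [this, e3]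
  have hba : b + a ≠ 0 := by
    intro h0
    apply h3
    rw [e1, h0, mul_zero]
  rw [e1, e2]
  field_simp

example : ((2:ℕ).divisors) = {1, 2} := Nat.Prime.divisors Nat.prime_two

lemma toRF_calc (p q : Polynomial ℤ) : toRF (p - q + 1) = toRF p - toRF q + 1 := by
  unfold toRF; rw [map_add, map_sub, map_one]

lemma toRF_succ (i : ℕ) : toRF (critPoly 2 (i+1)) = toRF (critPoly 2 i) ^ 2 + toRF X := by
  rw [critPoly_succ]; unfold toRF; rw [map_add, map_pow]

lemma FRat_two (m : ℕ) :
    FRat 2 (m+1) 2 = toRF (critPoly 2 (m+1) - critPoly 2 m + 1) := by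
  unfold FRat
  rw [Nat.Prime.divisors Nat.prime_two, Finset.prod_insert (by decide), Finset.prod_singleton]
  simp only [Nat.add_sub_cancel]
  norm_num [ArithmeticFunction.moebius_apply_prime Nat.prime_two,
    ArithmeticFunction.moebius_apply_one]
  rw [toRF_calc]
  rw [show (toRF (critPoly 2 (m + 1)) - toRF (critPoly 2 m)) /
      (toRF (critPoly 2 (m + 1 + 1)) - toRF (critPoly 2 (m + 1))) =
      ((toRF (critPoly 2 (m + 1 + 1)) - toRF (critPoly 2 (m + 1))) /
        (toRF (critPoly 2 (m + 1)) - toRF (critPoly 2 m)))⁻¹ from (inv_div _ _).symm]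
  exact field_calc (toRF (critPoly 2 m)) (toRF (critPoly 2 (m+1))) (toRF (critPoly 2 (m+2)))
    (toRF (critPoly 2 (m+3))) (toRF X) (toRF_succ m) (toRF_succ (m+1)) (toRF_succ (m+2))
    (sub_ne_zero.mpr (toRF_ne (crit_ne (by omega))))
    (sub_ne_zero.mpr (toRF_ne (crit_ne (by omega))))
    (sub_ne_zero.mpr (toRF_ne (crit_ne (by omega))))

def Dm (m : ℕ) : Polynomial ℤ := critPoly 2 (m+1) - critPoly 2 m + 1

lemma FRat_two' (m : ℕ) : FRat 2 (m+1) 2 = toRF (Dm m) := FRat_two m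

lemma Dm_zero : Dm 0 = X + 1 := by simp [Dm, critPoly]

lemma Dm_monic (m : ℕ) : (Dm (m+1)).Monic ∧ (Dm (m+1)).natDegree = 2^(m+1) := by
  have hrw : Dm (m+1) = critPoly 2 (m+2) + (1 - critPoly 2 (m+1)) := by unfold Dm; ring
  have hmon := critPoly_monic (m+1)
  have hlt : (1 - critPoly 2 (m+1)).degree < (critPoly 2 (m+2)).degree := by
    refine lt_of_le_of_lt (degree_sub_le _ _) ?_
    rw [degree_one, degree_eq_natDegree (critPoly_monic m).ne_zero,
      degree_eq_natDegree hmon.ne_zero, critPoly_natDegree, critPoly_natDegree]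
    apply max_lt
    · exact_mod_cast pow_pos (by norm_num : (0:ℕ) < 2) (m+1)
    · exact_mod_cast Nat.pow_lt_pow_succ one_lt_two
  constructor
  · rw [hrw]; exact hmon.add_of_left hlt
  · rw [hrw, natDegree_add_eq_left_of_degree_lt hlt, critPoly_natDegree]

abbrev φ2 : ℤ →+* ZMod 2 := Int.castRingHom (ZMod 2)

def W (i : ℕ) : Polynomial (ZMod 2) := ((critPoly 2 i).map φ2).comp (X + 1)

lemma W_succ (i : ℕ) : W (i+1) = (W i)^2 + (X + 1) := by
  unfold W
  rw [critPoly_succ, Polynomial.map_add, Polynomial.map_pow, map_X, add_comp, pow_comp, X_comp]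

lemma two_eq_zero : (2 : Polynomial (ZMod 2)) = 0 := by
  have : ((2 : ℕ) : Polynomial (ZMod 2)) = 0 := CharP.cast_eq_zero _ 2
  exact_mod_cast this

lemma W_formula : ∀ i, W (i+1) = W i + X^(2^i) + 1 := by
  intro i
  induction i with
  | zero =>
    rw [W_succ]
    have h0 : W 0 = 0 := by simp [W, critPoly]
    rw [h0]; ring
  | succ n ih =>
    haveI : Fact (Nat.Prime 2) := ⟨Nat.prime_two⟩
    have key : W n ^ 2 + (X + 1) = W n + X^(2^n) + 1 := by rw [← W_succ n, ih]
    rw [W_succ (n+1), ih, add_pow_char, add_pow_char, one_pow, ← pow_mul, ← pow_succ]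
    linear_combination key

lemma Dm_map (m : ℕ) :
    ((Dm (m+1)).map φ2).comp (X + 1) = X ^ (2^(m+1)) := by
  have : ((Dm (m+1)).map φ2).comp (X + 1) = W (m+2) - W (m+1) + 1 := by
    unfold Dm W
    rw [Polynomial.map_add, Polynomial.map_sub, Polynomial.map_one, add_comp, sub_comp, one_comp]
  rw [this, W_formula (m+1)]
  linear_combination two_eq_zero

lemma eval_crit : ∀ i, (critPoly 2 i).eval (-1 : ℤ) = if Even i then 0 else -1 := by
  intro i
  induction i with
  | zero => simp [critPoly]
  | succ n ih =>
    rw [critPoly_succ, eval_add, eval_pow, eval_X, ih]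
    by_cases h : Even n <;> simp [h, Nat.even_add_one] <;> norm_num

lemma eval_dcrit : ∀ i, (derivative (critPoly 2 (i+1))).eval (-1 : ℤ) = if Even i then 1 else -1 := by
  intro i
  induction i with
  | zero =>
    rw [critPoly_succ]
    simp [critPoly]
  | succ n ih =>
    rw [critPoly_succ (n+1), derivative_add, derivative_X, derivative_pow, eval_add, eval_mul,
      eval_mul, eval_C, eval_pow, eval_crit (n+1), eval_one, ih]
    by_cases h : Even n <;> simp [h, Nat.even_add_one] <;> norm_num

lemma eisen_irred (H : Polynomial ℤ) (n : ℕ) (hn : 0 < n) (hmon : H.Monic)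
    (hdeg : H.natDegree = n)
    (hmap : H.map φ2 = X ^ n)
    (h0 : H.coeff 0 = 2) : Irreducible H := by
  have hPprime : (Ideal.span {(2:ℤ)}).IsPrime :=
    (Ideal.span_singleton_prime (by norm_num)).mpr Int.prime_two
  apply irreducible_of_eisenstein_criterion hPprime
  · rw [hmon.leadingCoeff, Ideal.mem_span_singleton]
    norm_num
  · intro k hk
    rw [degree_eq_natDegree hmon.ne_zero, hdeg, Nat.cast_lt] at hk
    rw [Ideal.mem_span_singleton]
    have hcoef : ((H.coeff k : ℤ) : ZMod 2) = 0 := by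
      have := congrArg (fun p => Polynomial.coeff p k) hmap
      simp only [coeff_map] at this
      rw [coeff_X_pow] at this
      simpa [hk.ne] using this
    exact_mod_cast (ZMod.intCast_zmod_eq_zero_iff_dvd _ 2).mp hcoef
  · rw [degree_eq_natDegree hmon.ne_zero, hdeg]
    exact_mod_cast hn
  · rw [h0, Ideal.span_singleton_pow, Ideal.mem_span_singleton]
    norm_num
  · exact hmon.isPrimitive

lemma shift_irred (G : Polynomial ℤ) (n : ℕ) (hn : 0 < n)
    (hmon : (G.comp (X - C 1)).Monic)
    (hdeg : (G.comp (X - C 1)).natDegree = n)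
    (hmap : (G.comp (X - C 1)).map φ2 = X ^ n)
    (h0 : (G.comp (X - C 1)).coeff 0 = 2) :
    Irreducible (G.map (Int.castRingHom ℚ)) := by
  have hH : Irreducible (G.comp (X - C 1)) := eisen_irred _ n hn hmon hdeg hmap h0
  have hq : Irreducible ((G.comp (X - C 1)).map (Int.castRingHom ℚ)) :=
    (Polynomial.IsPrimitive.Int.irreducible_iff_irreducible_map_cast hmon.isPrimitive).mp hH
  have hmapcomp : (G.comp (X - C 1)).map (Int.castRingHom ℚ)
      = (G.map (Int.castRingHom ℚ)).comp (X - C 1) := by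
    rw [Polynomial.map_comp]
    congr 1
    simp
  have hcomp : ((G.comp (X - C 1)).map (Int.castRingHom ℚ)).comp (X + C 1)
      = G.map (Int.castRingHom ℚ) := by
    rw [hmapcomp, comp_assoc]
    simp
  have := (MulEquiv.irreducible_iff (algEquivAevalXAddC (1:ℚ))).mpr hq
  rw [show (algEquivAevalXAddC (1:ℚ)) ((G.comp (X - C 1)).map (Int.castRingHom ℚ))
      = ((G.comp (X - C 1)).map (Int.castRingHom ℚ)).comp (X + C 1) from rfl, hcomp] at this
  exact this

lemma toRF_zero : toRF 0 = 0 := by unfold toRF; rw [map_zero]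

lemma Xsub1_map : (X - C 1 : Polynomial ℤ).map φ2 = X + 1 := by
  rw [Polynomial.map_sub, map_X, map_C, map_one, C_1, CharTwo.sub_eq_add]

lemma irred_even (m' : ℕ) (hm' : Even m') (G : Polynomial ℤ) (hGe : G = Dm (m'+1)) :
    Irreducible (G.map (Int.castRingHom ℚ)) := by
  subst hGe
  obtain ⟨hmonD, hdegD⟩ := Dm_monic m'
  apply shift_irred _ (2^(m'+1)) (pow_pos (by norm_num : (0:ℕ) < 2) _)
  · exact hmonD.comp (monic_X_sub_C 1) (by rw [natDegree_X_sub_C]; norm_num)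
  · rw [natDegree_comp, natDegree_X_sub_C, mul_one, hdegD]
  · rw [Polynomial.map_comp, Xsub1_map, Dm_map]
  · rw [coeff_zero_eq_eval_zero, eval_comp,
      show eval 0 (X - C 1 : Polynomial ℤ) = -1 by norm_num]
    unfold Dm
    rw [eval_add, eval_sub, eval_one, eval_crit, eval_crit]
    have h1 : Even (m'+1+1) := by rw [Nat.even_add_one, Nat.even_add_one]; simpa using hm'
    have h2 : ¬ Even (m'+1) := by rw [Nat.even_add_one]; simpa using hm'
    norm_num [h1, h2]

lemma irred_odd (m' : ℕ) (hm' : ¬ Even m') (G : Polynomial ℤ)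
    (hGe : G * (X + 1) = Dm (m'+1)) :
    Irreducible (G.map (Int.castRingHom ℚ)) := by
  obtain ⟨hmonD, hdegD⟩ := Dm_monic m'
  have hX1 : (X + 1 : Polynomial ℤ).Monic := by simpa using monic_X_add_C (1:ℤ)
  have hGmon : G.Monic := hX1.of_mul_monic_right (hGe ▸ hmonD)
  have hdegG : G.natDegree + 1 = 2^(m'+1) := by
    have := congrArg natDegree hGe
    rwa [natDegree_mul hGmon.ne_zero hX1.ne_zero, hdegD,
      show (X + 1 : Polynomial ℤ).natDegree = 1 by simpa using natDegree_X_add_C (1:ℤ)] at this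
  have hd : (Dm (m'+1)).comp (X - C 1) = G.comp (X - C 1) * X := by
    rw [← hGe, mul_comp, add_comp, X_comp, one_comp, C_1]
    ring_nf
  apply shift_irred _ G.natDegree (by omega)
  · exact hGmon.comp (monic_X_sub_C 1) (by rw [natDegree_X_sub_C]; norm_num)
  · rw [natDegree_comp, natDegree_X_sub_C, mul_one]
  · -- map to ZMod 2
    have h1 : ((Dm (m'+1)).comp (X - C 1)).map φ2 = X ^ (2^(m'+1)) := by
      rw [Polynomial.map_comp, Xsub1_map, Dm_map]
    rw [hd, Polynomial.map_mul, map_X] at h1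
    have h2 : (X : Polynomial (ZMod 2)) ^ (2^(m'+1)) = X ^ G.natDegree * X := by
      rw [← pow_succ]
      congr 1
      omega
    rw [h2] at h1
    exact mul_right_cancel₀ X_ne_zero h1
  · -- constant coefficient
    have hc : (G.comp (X - C 1)).coeff 0 = ((Dm (m'+1)).comp (X - C 1)).coeff 1 := by
      rw [hd, coeff_mul_X]
    rw [hc]
    have hder := coeff_derivative ((Dm (m'+1)).comp (X - C 1)) 0
    have hc1 : ((Dm (m'+1)).comp (X - C 1)).coeff 1
        = (derivative ((Dm (m'+1)).comp (X - C 1))).eval 0 := by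
      rw [← coeff_zero_eq_eval_zero, hder]
      norm_num
    rw [hc1, derivative_comp, eval_mul, eval_comp,
      show eval 0 (X - C 1 : Polynomial ℤ) = -1 by norm_num,
      show eval 0 (derivative (X - C 1 : Polynomial ℤ)) = 1 by
        rw [derivative_sub, derivative_X, derivative_C]; norm_num,
      one_mul]
    have hDd : derivative (Dm (m'+1))
        = derivative (critPoly 2 (m'+1+1)) - derivative (critPoly 2 (m'+1)) := by
      unfold Dm
      rw [derivative_add, derivative_one, derivative_sub, add_zero]
    rw [hDd, eval_sub, eval_dcrit (m'+1), eval_dcrit m']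
    have h1 : Even (m'+1) := by rw [Nat.even_add_one]; simpa using hm'
    norm_num [h1, hm']

/-- For every `m ≥ 2`, `G_{2,m,2}` is irreducible over `ℚ`. -/
theorem misiurewicz_irreducible_two_two (m : ℕ) (hm : 2 ≤ m)
    (G : Polynomial ℤ) (hG : IsMisiurewicz 2 m 2 G) :
    Irreducible (G.map (Int.castRingHom ℚ)) := by
  obtain ⟨m', rfl⟩ : ∃ k, m = k + 2 := ⟨m - 2, by omega⟩
  unfold IsMisiurewicz GRat at hG
  have hF : FRat 2 (m'+2) 2 = toRF (Dm (m'+1)) := FRat_two' (m'+1)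
  have hF1 : FRat 2 1 2 = toRF (X + 1) := by
    have h := FRat_two' 0
    rwa [Dm_zero] at h
  by_cases hpar : (2:ℕ) ∣ (m' + 2) - 1
  · rw [if_pos hpar, hF, hF1] at hG
    have h10 : (X + 1 : Polynomial ℤ) ≠ 0 := fun h => by simpa using congrArg (eval 0) h
    have hne : toRF (X + 1) ≠ 0 := fun h => h10 (toRF_inj (h.trans toRF_zero.symm))
    have hmul : toRF (G * (X + 1)) = toRF (Dm (m'+1)) := by
      have hm2 : toRF (G * (X+1)) = toRF G * toRF (X+1) := by unfold toRF; rw [map_mul]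
      rw [hm2, hG, div_mul_cancel₀ _ hne]
    exact irred_odd m' (by rw [Nat.even_iff]; omega) G (toRF_inj hmul)
  · rw [if_neg hpar, hF] at hG
    exact irred_even m' (by rw [Nat.even_iff]; omega) G (toRF_inj hG)
end
end

section
/- For every integer m ≥ 2, the Misiurewicz polynomial G_{3,m,2}(c) is irreducible over ℚ. -/
set_option synthInstance.maxHeartbeats 1000000
set_option maxHeartbeats 1000000
set_option linter.unnecessarySeqFocus false


open Polynomial

noncomputable section

section MisAuxSection

namespace MisAux

abbrev a (k : ℕ) : Polynomial ℤ := critPoly 3 k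

lemma a_zero : a 0 = 0 := rfl
lemma a_succ (k : ℕ) : a (k+1) = a k ^ 3 + X := rfl
lemma a_one : a 1 = X := by simp [a_succ, a_zero]
lemma a_two : a 2 = X^3 + X := by rw [a_succ, a_one]

lemma a_monic_deg : ∀ k : ℕ, (a (k+1)).Monic ∧ (a (k+1)).natDegree = 3 ^ k := by
  intro k
  induction k with
  | zero => rw [a_one]; exact ⟨monic_X, natDegree_X⟩
  | succ k ih =>
    obtain ⟨hm, hd⟩ := ih
    have hm3 : (a (k+1) ^ 3).Monic := hm.pow 3
    have hd3 : (a (k+1) ^ 3).natDegree = 3 ^ (k+1) := by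
      rw [natDegree_pow, hd, pow_succ, mul_comm]
    have hdeg : (X : Polynomial ℤ).degree < (a (k+1) ^ 3).degree := by
      rw [degree_X, degree_eq_natDegree hm3.ne_zero, hd3]
      exact_mod_cast Nat.one_lt_pow (Nat.succ_ne_zero k) (by norm_num)
    constructor
    · rw [a_succ]; exact hm3.add_of_left hdeg
    · rw [a_succ, natDegree_add_eq_left_of_degree_lt hdeg] <;> exact hd3

lemma a_monic {k : ℕ} (hk : 1 ≤ k) : (a k).Monic := by
  obtain ⟨j, rfl⟩ := Nat.exists_eq_add_of_le' hk
  exact (a_monic_deg j).1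

lemma a_natDegree {k : ℕ} (hk : 1 ≤ k) : (a k).natDegree = 3 ^ (k - 1) := by
  obtain ⟨j, rfl⟩ := Nat.exists_eq_add_of_le' hk
  simpa using (a_monic_deg j).2

lemma a_degree_lt {j k : ℕ} (h : j < k) : (a j).degree < (a k).degree := by
  have hk : 1 ≤ k := Nat.one_le_of_lt (Nat.lt_of_le_of_lt (Nat.zero_le j) h)
  have hkm : (a k).Monic := a_monic hk
  cases j with
  | zero =>
    rw [a_zero, degree_zero]
    exact bot_lt_iff_ne_bot.2 (fun hb => hkm.ne_zero (degree_eq_bot.mp hb))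
  | succ j =>
    rw [degree_eq_natDegree hkm.ne_zero, degree_eq_natDegree (a_monic (by omega : 1 ≤ j+1)).ne_zero,
      a_natDegree hk, a_natDegree (by omega : 1 ≤ j+1)]
    exact_mod_cast Nat.pow_lt_pow_right (by norm_num)
      (by omega)

lemma a_sub_ne_zero {j k : ℕ} (h : j < k) : a k - a j ≠ 0 := by
  rw [sub_ne_zero]
  intro he
  exact absurd (congrArg degree he) (ne_of_gt (a_degree_lt h))

lemma sub_succ_factor (j k : ℕ) :
    a (j+1) - a (k+1) = (a j - a k) * (a j ^ 2 + a j * a k + a k ^ 2) := by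
  rw [a_succ, a_succ]; ring

end MisAux


namespace MisAux

/-- `Q_{j+1} = a_{j+1}^2 + a_{j+1} a_j + a_j^2`. -/
def Qp (j : ℕ) : Polynomial ℤ := a (j+1) ^ 2 + a (j+1) * a j + a j ^ 2

/-- `R_{j+1} = a_{j+2}^2 + a_{j+2} a_j + a_j^2`. -/
def Rp (j : ℕ) : Polynomial ℤ := a (j+2) ^ 2 + a (j+2) * a j + a j ^ 2

lemma Qp_zero : Qp 0 = X ^ 2 := by simp [Qp, a_one, a_zero]
lemma Rp_zero : Rp 0 = X ^ 2 * (X ^ 2 + 1) ^ 2 := by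
  rw [Rp, show (0+2)=2 from rfl, a_two, a_zero]; ring

lemma monic_quadform {p q : Polynomial ℤ} (hp : p.Monic) (hq : q.Monic)
    (h : q.natDegree < p.natDegree) : (p ^ 2 + p * q + q ^ 2).Monic := by
  have hlt : q.degree < p.degree := degree_lt_degree h
  have h1 : (p * (p + q)).Monic := hp.mul (hp.add_of_left hlt)
  have hd1 : (p * (p + q)).degree = p.degree + p.degree := by
    rw [degree_mul, degree_add_eq_left_of_degree_lt hlt]
  have h2 : (q ^ 2).degree < (p * (p + q)).degree := by
    rw [hd1, pow_two, degree_mul, degree_eq_natDegree hp.ne_zero,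
      degree_eq_natDegree hq.ne_zero]
    exact_mod_cast by omega
  have : p ^ 2 + p * q + q ^ 2 = p * (p + q) + q ^ 2 := by ring
  rw [this]
  exact h1.add_of_left h2

lemma Qp_monic {j : ℕ} (hj : 1 ≤ j) : (Qp j).Monic := by
  refine monic_quadform (a_monic (by omega)) (a_monic hj) ?_
  rw [a_natDegree (by omega : 1 ≤ j + 1), a_natDegree hj]
  exact Nat.pow_lt_pow_right (by norm_num) (by omega)

lemma Rp_monic {j : ℕ} (hj : 1 ≤ j) : (Rp j).Monic := by
  refine monic_quadform (a_monic (by omega)) (a_monic hj) ?_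
  rw [a_natDegree (by omega : 1 ≤ j + 2), a_natDegree hj]
  exact Nat.pow_lt_pow_right (by norm_num) (by omega)

lemma toRF_injective : Function.Injective toRF :=
  IsFractionRing.injective (Polynomial ℤ) RF

lemma toRF_ne_zero {p : Polynomial ℤ} (h : p ≠ 0) : toRF p ≠ 0 := by
  intro h0
  exact h (toRF_injective (h0.trans (map_zero (algebraMap (Polynomial ℤ) RF)).symm))

lemma toRF_sub (p q : Polynomial ℤ) : toRF p - toRF q = toRF (p - q) :=
  (map_sub (algebraMap (Polynomial ℤ) RF) p q).symm

lemma toRF_mul (p q : Polynomial ℤ) : toRF (p * q) = toRF p * toRF q :=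
  map_mul (algebraMap (Polynomial ℤ) RF) p q

lemma FRat_eq (j : ℕ) : FRat 3 (j+1) 2 = toRF (Rp j) / toRF (Qp j) := by
  have h1 : toRF (a (j+1) - a j) ≠ 0 := toRF_ne_zero (a_sub_ne_zero (by omega))
  have h2 : toRF (a (j+2) - a j) ≠ 0 := toRF_ne_zero (a_sub_ne_zero (by omega))
  rw [FRat, show Nat.divisors 2 = {1, 2} from by decide,
    Finset.prod_pair (by norm_num : (1:ℕ) ≠ 2)]
  have hμ1 : ArithmeticFunction.moebius (2 / 1) = -1 := by
    norm_num [ArithmeticFunction.moebius_apply_prime Nat.prime_two]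
  have hμ2 : ArithmeticFunction.moebius (2 / 2) = 1 := by
    norm_num
  rw [hμ1, hμ2, zpow_neg_one, zpow_one]
  simp only [Nat.add_sub_cancel, show j+1+1 = j+2 from rfl, show j+1+2 = j+3 from rfl]
  rw [toRF_sub (a (j+2)) (a (j+1)), toRF_sub (a (j+1)) (a j),
    toRF_sub (a (j+3)) (a (j+1)), toRF_sub (a (j+2)) (a j)]
  have e1 : a (j+2) - a (j+1) = (a (j+1) - a j) * Qp j := by
    rw [Qp]; exact sub_succ_factor (j+1) j
  have e2 : a (j+3) - a (j+1) = (a (j+2) - a j) * Rp j := by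
    rw [Rp]; exact sub_succ_factor (j+2) j
  rw [e1, e2, toRF_mul, toRF_mul, mul_div_cancel_left₀ _ h1,
    mul_div_cancel_left₀ _ h2, inv_mul_eq_div]

end MisAux

namespace MisAux

lemma pi_monic : (X ^ 2 + 1 : Polynomial ℤ).Monic := by
  have := monic_X_pow_add_C (1 : ℤ) (by norm_num : (2:ℕ) ≠ 0)
  rwa [C_1] at this

lemma identity_even {j : ℕ} (hj : 1 ≤ j) (hodd : ¬ 2 ∣ j) {G : Polynomial ℤ}
    (hG : IsMisiurewicz 3 (j+1) 2 G) : G * Qp j = Rp j := by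
  have hQ : toRF (Qp j) ≠ 0 := toRF_ne_zero (Qp_monic hj).ne_zero
  rw [IsMisiurewicz, GRat, Nat.add_sub_cancel, if_neg hodd, FRat_eq] at hG
  apply toRF_injective
  rw [toRF_mul, hG, div_mul_cancel₀ _ hQ]

lemma identity_odd {j : ℕ} (hj : 1 ≤ j) (heven : 2 ∣ j) {G : Polynomial ℤ}
    (hG : IsMisiurewicz 3 (j+1) 2 G) : G * Qp j * (X ^ 2 + 1) ^ 2 = Rp j := by
  have hQ : toRF (Qp j) ≠ 0 := toRF_ne_zero (Qp_monic hj).ne_zero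
  have hQ0 : toRF (Qp 0) ≠ 0 := by
    rw [Qp_zero]; exact toRF_ne_zero (pow_ne_zero _ X_ne_zero)
  have hR0 : toRF (Rp 0) ≠ 0 := by
    rw [Rp_zero]
    exact toRF_ne_zero (mul_ne_zero (pow_ne_zero _ X_ne_zero)
      (pow_ne_zero _ pi_monic.ne_zero))
  have hF1 : FRat 3 1 2 = toRF (Rp 0) / toRF (Qp 0) := FRat_eq 0
  rw [IsMisiurewicz, GRat, Nat.add_sub_cancel, if_pos heven, FRat_eq, hF1] at hG
  have key : toRF (G * Qp j * Rp 0) = toRF (Rp j * Qp 0) := by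
    rw [toRF_mul, toRF_mul, toRF_mul, hG]
    field_simp
  have key2 : G * Qp j * Rp 0 = Rp j * Qp 0 := toRF_injective key
  rw [Rp_zero, Qp_zero] at key2
  have key3 : (X:Polynomial ℤ) ^ 2 * (G * Qp j * (X ^ 2 + 1) ^ 2) = X ^ 2 * Rp j := by
    linear_combination key2
  exact mul_left_cancel₀ (pow_ne_zero 2 X_ne_zero) key3

lemma G_monic_even {j : ℕ} (hj : 1 ≤ j) {G : Polynomial ℤ}
    (hid : G * Qp j = Rp j) : G.Monic := by
  refine Monic.of_mul_monic_left (Qp_monic hj) ?_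
  rw [mul_comm, hid]; exact Rp_monic hj

lemma G_monic_odd {j : ℕ} (hj : 1 ≤ j) {G : Polynomial ℤ}
    (hid : G * Qp j * (X ^ 2 + 1) ^ 2 = Rp j) : G.Monic := by
  refine Monic.of_mul_monic_left ((Qp_monic hj).mul (pi_monic.pow 2)) ?_
  rw [show Qp j * (X ^ 2 + 1) ^ 2 * G = G * Qp j * (X ^ 2 + 1) ^ 2 from by ring, hid]
  exact Rp_monic hj

/-! ### Evaluation at `i` in the Gaussian integers -/

abbrev ι : GaussianInt := Zsqrtd.sqrtd

lemma ι_sq : ι ^ 2 = -1 := by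
  rw [pow_two, Zsqrtd.dmuld]; norm_num

def φ : Polynomial ℤ →ₐ[ℤ] GaussianInt := Polynomial.aeval ι

lemma φ_X : φ X = ι := Polynomial.aeval_X ι

lemma φ_a : ∀ j : ℕ, φ (a (2*j)) = 0 ∧ φ (a (2*j+1)) = ι := by
  intro j
  induction j with
  | zero => constructor
            · simp [φ, a_zero]
            · simp [φ, a_one]
  | succ j ih =>
    obtain ⟨h0, h1⟩ := ih
    have e2 : φ (a (2*j+2)) = 0 := by
      rw [show 2*j+2 = (2*j+1)+1 from rfl, a_succ, map_add, map_pow, h1,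
        φ_X, show ι^3 = ι^2*ι from by ring, ι_sq]
      ring
    constructor
    · rw [show 2*(j+1) = 2*j+2 from by ring]; exact e2
    · rw [show 2*(j+1)+1 = (2*j+2)+1 from by ring, a_succ, map_add, map_pow, e2,
        φ_X]
      ring

lemma φ_a_even {k : ℕ} (h : 2 ∣ k) : φ (a k) = 0 := by
  obtain ⟨j, rfl⟩ := h; exact (φ_a j).1

lemma φ_a_odd {k : ℕ} (h : ¬ 2 ∣ k) : φ (a k) = ι := by
  obtain ⟨t, rfl⟩ : ∃ t, k = 2*t+1 := by
    rcases Nat.even_or_odd k with he | ho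
    · exact absurd he.two_dvd h
    · obtain ⟨t, ht⟩ := ho; exact ⟨t, ht⟩
  exact (φ_a t).2

end MisAux

namespace MisAux

lemma pi_dvd_a_even : ∀ j : ℕ, (X ^ 2 + 1 : Polynomial ℤ) ∣ a (2*j) := by
  intro j
  induction j with
  | zero => simp [a_zero]
  | succ j ih =>
    have key : a (2*(j+1)) =
        a (2*j) ^ 3 * ((a (2*j) ^ 3 + X) ^ 2 + (a (2*j) ^ 3 + X) * X + X ^ 2)
          + X * (X ^ 2 + 1) := by
      rw [show 2*(j+1) = (2*j+1)+1 from by ring, a_succ, a_succ]; ring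
    rw [key]
    exact dvd_add ((dvd_pow ih (by norm_num)).mul_right _) (dvd_mul_left _ _)

lemma φ_C (r : ℤ) : φ (C r) = (r : GaussianInt) := by
  simp [φ, aeval_C]

lemma φ_pi : φ (X ^ 2 + 1) = 0 := by
  rw [map_add, map_pow, φ_X, ι_sq, map_one]; ring

lemma φ_deriv_odd {k : ℕ} (hk : 2 ∣ k) : φ (derivative (a (k+1))) = 1 := by
  rw [a_succ, derivative_add, derivative_X, derivative_pow, map_add, map_mul,
    map_mul, map_pow, φ_a_even hk, map_one]
  ring

lemma φ_deriv_even (u : ℕ) : φ (derivative (a (2*u+2))) = -2 := by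
  have h1 : φ (derivative (a (2*u+1))) = 1 := φ_deriv_odd ⟨u, rfl⟩
  rw [show 2*u+2 = (2*u+1)+1 from rfl, a_succ, derivative_add, derivative_X,
    derivative_pow, map_add, map_mul, map_mul, map_pow,
    φ_a_odd (by omega), h1, φ_C, map_one]
  push_cast
  rw [ι_sq]
  ring

lemma two_ι_ne_zero : (2 * ι : GaussianInt) ≠ 0 := by decide

lemma φ_quot {k : ℕ} (hk2 : 2 ∣ k) (hk : 2 ≤ k) {s : Polynomial ℤ}
    (hs : a k = (X ^ 2 + 1) * s) : φ s = ι := by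
  obtain ⟨u, rfl⟩ : ∃ u, k = 2*u+2 := by
    obtain ⟨v, rfl⟩ := hk2; exact ⟨v - 1, by omega⟩
  have hder : φ (derivative (a (2*u+2))) = -2 := φ_deriv_even u
  rw [hs, derivative_mul, map_add, map_mul, map_mul, φ_pi, zero_mul, add_zero,
    derivative_add, derivative_X_pow, derivative_one, add_zero, map_mul, map_pow,
    φ_C, φ_X] at hder
  have hh : (2 * ι) * (φ s - ι) = 0 := by
    push_cast at hder
    linear_combination hder - 2 * ι_sq
  exact sub_eq_zero.mp ((mul_eq_zero.mp hh).resolve_left two_ι_ne_zero)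

lemma φ_G_even {j : ℕ} (hodd : ¬ 2 ∣ j) {G : Polynomial ℤ}
    (hid : G * Qp j = Rp j) : φ G = 3 := by
  have hQ : φ (Qp j) = -1 := by
    rw [Qp, map_add, map_add, map_pow, map_pow, map_mul,
      φ_a_even (by omega : 2 ∣ j+1), φ_a_odd hodd]
    linear_combination ι_sq
  have hR : φ (Rp j) = -3 := by
    rw [Rp, map_add, map_add, map_pow, map_pow, map_mul,
      φ_a_odd (by omega : ¬ 2 ∣ j+2), φ_a_odd hodd]
    linear_combination 3 * ι_sq
  have := congrArg φ hid
  rw [map_mul, hQ, hR] at this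
  linear_combination -this

lemma φ_G_odd {j : ℕ} (heven : 2 ∣ j) (hj : 2 ≤ j) {G : Polynomial ℤ}
    (hid : G * Qp j * (X ^ 2 + 1) ^ 2 = Rp j) : φ G = 3 := by
  obtain ⟨v, hv⟩ := id heven
  obtain ⟨s', hs'⟩ : (X ^ 2 + 1 : Polynomial ℤ) ∣ a j := by
    rw [hv]; exact pi_dvd_a_even v
  obtain ⟨s, hs⟩ : (X ^ 2 + 1 : Polynomial ℤ) ∣ a (j+2) := by
    have := pi_dvd_a_even (v+1)
    rwa [show 2*(v+1) = j+2 from by omega] at this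
  have hRp : Rp j = (X ^ 2 + 1) ^ 2 * (s ^ 2 + s * s' + s' ^ 2) := by
    rw [Rp, hs, hs']; ring
  have hcan : (X ^ 2 + 1 : Polynomial ℤ) ^ 2 * (G * Qp j)
      = (X ^ 2 + 1) ^ 2 * (s ^ 2 + s * s' + s' ^ 2) := by
    rw [← hRp, ← hid]; ring
  have hmain : G * Qp j = s ^ 2 + s * s' + s' ^ 2 :=
    mul_left_cancel₀ (pow_ne_zero 2 pi_monic.ne_zero) hcan
  have hQ : φ (Qp j) = -1 := by
    rw [Qp, map_add, map_add, map_pow, map_pow, map_mul,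
      φ_a_odd (by omega : ¬ 2 ∣ j+1), φ_a_even heven]
    linear_combination ι_sq
  have hφs : φ s = ι := φ_quot (by omega) (by omega) hs
  have hφs' : φ s' = ι := φ_quot heven hj hs'
  have := congrArg φ hmain
  rw [map_mul, hQ, map_add, map_add, map_pow, map_pow, map_mul, hφs, hφs'] at this
  linear_combination -this - 3 * ι_sq

end MisAux

namespace MisAux

instance : Fact (Nat.Prime 3) := ⟨by norm_num⟩

abbrev b (k : ℕ) : Polynomial (ZMod 3) := (a k).map (Int.castRingHom (ZMod 3))

lemma b_zero : b 0 = 0 := by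
  show (a 0).map (Int.castRingHom (ZMod 3)) = 0
  rw [a_zero, Polynomial.map_zero]

lemma b_succ (k : ℕ) : b (k+1) = b k ^ 3 + X := by
  show (a (k+1)).map (Int.castRingHom (ZMod 3)) = _
  rw [a_succ, Polynomial.map_add, Polynomial.map_pow, map_X]

lemma char3 : (3 : Polynomial (ZMod 3)) = 0 := by
  have := CharP.cast_eq_zero (Polynomial (ZMod 3)) 3
  rwa [Nat.cast_ofNat] at this

lemma b_sub : ∀ k : ℕ, b (k+1) - b k = X ^ (3 ^ k) := by
  intro k
  induction k with
  | zero => rw [b_succ, b_zero, pow_zero, pow_one]; ring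
  | succ k ih =>
    have hp : (b (k+1) - b k) ^ 3 = (b (k+1))^3 - (b k)^3 :=
      sub_pow_char (R := Polynomial (ZMod 3)) (p := 3) (x := b (k+1)) (y := b k)
    have hsub : b (k+2) - b (k+1) = (b (k+1) - b k) ^ 3 := by
      linear_combination b_succ (k+1) - b_succ k - hp
    rw [hsub, ih, ← pow_mul, pow_succ]

lemma b_sub2 (k : ℕ) : b (k+2) - b k = X ^ (3 ^ k) * (X ^ 2 + 1) ^ (3 ^ k) := by
  have hfrob : ((X : Polynomial (ZMod 3)) ^ 2 + 1) ^ (3 ^ k)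
      = (X ^ 2) ^ (3 ^ k) + 1 := by
    rw [add_pow_char_pow (R := Polynomial (ZMod 3)) (p := 3), one_pow]
  rw [hfrob]
  linear_combination b_sub (k+1) + b_sub k

lemma rho_Qp (j : ℕ) :
    (Qp j).map (Int.castRingHom (ZMod 3)) = X ^ (2 * 3 ^ j) := by
  have key : b (j+1) ^ 2 + b (j+1) * b j + b j ^ 2
      = (b (j+1) - b j) ^ 2 + 3 * (b (j+1) * b j) := by ring
  calc (Qp j).map (Int.castRingHom (ZMod 3))
      = b (j+1) ^ 2 + b (j+1) * b j + b j ^ 2 := by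
        rw [Qp, Polynomial.map_add, Polynomial.map_add, Polynomial.map_pow,
          Polynomial.map_pow, Polynomial.map_mul]
    _ = (b (j+1) - b j) ^ 2 := by rw [key, char3]; ring
    _ = (X ^ (3 ^ j)) ^ 2 := by rw [b_sub j]
    _ = X ^ (2 * 3 ^ j) := by rw [← pow_mul]; congr 1; ring

lemma rho_Rp (j : ℕ) :
    (Rp j).map (Int.castRingHom (ZMod 3))
      = X ^ (2 * 3 ^ j) * (X ^ 2 + 1) ^ (2 * 3 ^ j) := by
  have key : b (j+2) ^ 2 + b (j+2) * b j + b j ^ 2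
      = (b (j+2) - b j) ^ 2 + 3 * (b (j+2) * b j) := by ring
  calc (Rp j).map (Int.castRingHom (ZMod 3))
      = b (j+2) ^ 2 + b (j+2) * b j + b j ^ 2 := by
        rw [Rp, Polynomial.map_add, Polynomial.map_add, Polynomial.map_pow,
          Polynomial.map_pow, Polynomial.map_mul]
    _ = (b (j+2) - b j) ^ 2 := by rw [key, char3]; ring
    _ = (X ^ (3 ^ j) * (X ^ 2 + 1) ^ (3 ^ j)) ^ 2 := by rw [b_sub2 j]
    _ = X ^ (2 * 3 ^ j) * (X ^ 2 + 1) ^ (2 * 3 ^ j) := by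
        rw [mul_pow, ← pow_mul, ← pow_mul]; congr 2 <;> ring

lemma pi3_monic : ((X : Polynomial (ZMod 3)) ^ 2 + 1).Monic := by
  have := monic_X_pow_add_C (1 : ZMod 3) (by norm_num : (2:ℕ) ≠ 0)
  rwa [C_1] at this

lemma rho_G_even {j : ℕ} {G : Polynomial ℤ} (hid : G * Qp j = Rp j) :
    G.map (Int.castRingHom (ZMod 3)) = (X ^ 2 + 1) ^ (2 * 3 ^ j) := by
  have h := congrArg (Polynomial.map (Int.castRingHom (ZMod 3))) hid
  rw [Polynomial.map_mul, rho_Qp, rho_Rp] at h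
  have h2 : G.map (Int.castRingHom (ZMod 3)) * X ^ (2 * 3 ^ j)
      = (X ^ 2 + 1) ^ (2 * 3 ^ j) * X ^ (2 * 3 ^ j) := by
    rw [h]; ring
  exact mul_right_cancel₀ (pow_ne_zero _ X_ne_zero) h2

lemma rho_G_odd {j : ℕ} (hj : 2 ≤ j) {G : Polynomial ℤ}
    (hid : G * Qp j * (X ^ 2 + 1) ^ 2 = Rp j) :
    G.map (Int.castRingHom (ZMod 3)) = (X ^ 2 + 1) ^ (2 * 3 ^ j - 2) := by
  have h9 : 9 ≤ 3 ^ j := by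
    calc 9 = 3 ^ 2 := by norm_num
    _ ≤ 3 ^ j := Nat.pow_le_pow_right (by norm_num) hj
  have h := congrArg (Polynomial.map (Int.castRingHom (ZMod 3))) hid
  simp only [Polynomial.map_mul, Polynomial.map_pow, Polynomial.map_add,
    Polynomial.map_one, map_X, rho_Qp, rho_Rp] at h
  have hsplit : ((X : Polynomial (ZMod 3)) ^ 2 + 1) ^ (2 * 3 ^ j)
      = (X ^ 2 + 1) ^ (2 * 3 ^ j - 2) * (X ^ 2 + 1) ^ 2 := by
    rw [← pow_add]; congr 1; omega
  rw [hsplit] at h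
  have h2 : G.map (Int.castRingHom (ZMod 3)) * (X ^ 2 + 1) ^ 2 * X ^ (2 * 3 ^ j)
      = (X ^ 2 + 1) ^ (2 * 3 ^ j - 2) * (X ^ 2 + 1) ^ 2 * X ^ (2 * 3 ^ j) := by
    linear_combination h
  have h3 := mul_right_cancel₀ (pow_ne_zero _ X_ne_zero) h2
  exact mul_right_cancel₀ (pow_ne_zero _ pi3_monic.ne_zero) h3

end MisAux

namespace MisAux

lemma pi3_natDegree : ((X : Polynomial (ZMod 3)) ^ 2 + 1).natDegree = 2 := by
  have := natDegree_X_pow_add_C (n := 2) (r := (1 : ZMod 3))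
  rwa [C_1] at this

lemma pi3_irred : Irreducible ((X : Polynomial (ZMod 3)) ^ 2 + 1) := by
  rw [pi3_monic.irreducible_iff_roots_eq_zero_of_degree_le_three
    (by rw [pi3_natDegree]) (by rw [pi3_natDegree]; norm_num)]
  rw [Multiset.eq_zero_iff_forall_notMem]
  intro r hr
  rw [mem_roots pi3_monic.ne_zero] at hr
  simp only [IsRoot, eval_add, eval_pow, eval_X, eval_one] at hr
  exact (by decide : ∀ r : ZMod 3, ¬ (r ^ 2 + 1 = 0)) r hr

lemma pi3_prime : Prime ((X : Polynomial (ZMod 3)) ^ 2 + 1) :=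
  pi3_irred.prime

/-- If `(X²+1) ∣ A mod 3` then `A = (X²+1)·Cc + 3·Ee` over `ℤ`. -/
lemma lift_of_pi_dvd {A : Polynomial ℤ}
    (h : ((X : Polynomial (ZMod 3)) ^ 2 + 1) ∣ A.map (Int.castRingHom (ZMod 3))) :
    ∃ Cc Ee : Polynomial ℤ, A = (X ^ 2 + 1) * Cc + C 3 * Ee := by
  obtain ⟨c1, hc1⟩ := h
  obtain ⟨Cc, hCc⟩ : ∃ Cc : Polynomial ℤ, Cc.map (Int.castRingHom (ZMod 3)) = c1 :=
    Polynomial.map_surjective _ ZMod.intCast_surjective c1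
  have hD : (A - (X ^ 2 + 1) * Cc).map (Int.castRingHom (ZMod 3)) = 0 := by
    rw [Polynomial.map_sub, Polynomial.map_mul, Polynomial.map_add,
      Polynomial.map_pow, map_X, Polynomial.map_one, hCc, hc1]
    ring
  have h3 : C (3:ℤ) ∣ A - (X ^ 2 + 1) * Cc := by
    rw [C_dvd_iff_dvd_coeff]
    intro n
    have hcn : (Int.castRingHom (ZMod 3)) ((A - (X ^ 2 + 1) * Cc).coeff n) = 0 := by
      rw [← coeff_map, hD, coeff_zero]
    exact_mod_cast (ZMod.intCast_zmod_eq_zero_iff_dvd _ 3).mp hcn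
  obtain ⟨Ee, hEe⟩ := h3
  exact ⟨Cc, Ee, by linear_combination hEe⟩

lemma three_dvd_φ {A : Polynomial ℤ}
    (h : ((X : Polynomial (ZMod 3)) ^ 2 + 1) ∣ A.map (Int.castRingHom (ZMod 3))) :
    (3 : GaussianInt) ∣ φ A := by
  obtain ⟨Cc, Ee, hA⟩ := lift_of_pi_dvd h
  refine ⟨φ Ee, ?_⟩
  rw [hA, map_add, map_mul, map_mul, φ_pi, φ_C]
  push_cast
  ring

lemma unit_of_unit_map {A : Polynomial ℤ} (hu : IsUnit A.leadingCoeff)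
    (h0 : IsUnit (A.map (Int.castRingHom (ZMod 3)))) : IsUnit A := by
  have hfA : (Int.castRingHom (ZMod 3)) A.leadingCoeff ≠ 0 := by
    rcases Int.isUnit_iff.mp hu with h | h <;> rw [h] <;> decide
  have hdeg : A.degree = 0 := by
    rw [← degree_map_eq_of_leadingCoeff_ne_zero _ hfA]
    exact degree_eq_zero_of_isUnit h0
  have hA : A = C (A.coeff 0) := eq_C_of_degree_le_zero (le_of_eq hdeg)
  rw [hA]
  refine isUnit_C.mpr ?_
  have hnd : A.natDegree = 0 := natDegree_eq_zero_iff_degree_le_zero.mpr (le_of_eq hdeg)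
  rwa [Polynomial.leadingCoeff, hnd] at hu

lemma factor_dvd_pow {A B : Polynomial ℤ} {N : ℕ}
    (hmapAB : (A.map (Int.castRingHom (ZMod 3))) * (B.map (Int.castRingHom (ZMod 3)))
      = ((X : Polynomial (ZMod 3)) ^ 2 + 1) ^ N)
    (hu : IsUnit A.leadingCoeff) :
    IsUnit A ∨ ((X : Polynomial (ZMod 3)) ^ 2 + 1) ∣ A.map (Int.castRingHom (ZMod 3)) := by
  have hdvd : A.map (Int.castRingHom (ZMod 3)) ∣ ((X : Polynomial (ZMod 3)) ^ 2 + 1) ^ N :=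
    ⟨B.map (Int.castRingHom (ZMod 3)), hmapAB.symm⟩
  obtain ⟨i, hi, hassoc⟩ := (dvd_prime_pow pi3_prime N).mp hdvd
  rcases Nat.eq_zero_or_pos i with h0 | hpos
  · left
    subst h0
    rw [pow_zero] at hassoc
    exact unit_of_unit_map hu (associated_one_iff_isUnit.mp hassoc)
  · right
    exact dvd_trans (dvd_pow_self _ hpos.ne') hassoc.symm.dvd

lemma final {G : Polynomial ℤ} (hmon : G.Monic) {N : ℕ} (hN : 1 ≤ N)
    (hmod : G.map (Int.castRingHom (ZMod 3)) = ((X : Polynomial (ZMod 3)) ^ 2 + 1) ^ N)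
    (hval : φ G = 3) : Irreducible (G.map (Int.castRingHom ℚ)) := by
  rw [← Polynomial.IsPrimitive.Int.irreducible_iff_irreducible_map_cast hmon.isPrimitive]
  constructor
  · intro hu
    have h1 : (G.map (Int.castRingHom (ZMod 3))).natDegree ≤ G.natDegree :=
      natDegree_map_le
    rw [hmod, pi3_monic.natDegree_pow, pi3_natDegree,
      natDegree_eq_zero_of_isUnit hu] at h1
    omega
  · intro A B hAB
    have hlcG : A.leadingCoeff * B.leadingCoeff = 1 := by
      have h := hmon
      rw [hAB, Monic, leadingCoeff_mul] at h
      exact h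
    have huA : IsUnit A.leadingCoeff := IsUnit.of_mul_eq_one _ hlcG
    have huB : IsUnit B.leadingCoeff :=
      IsUnit.of_mul_eq_one _ (by rwa [mul_comm] at hlcG)
    have hmapAB : (A.map (Int.castRingHom (ZMod 3))) * (B.map (Int.castRingHom (ZMod 3)))
        = ((X : Polynomial (ZMod 3)) ^ 2 + 1) ^ N := by
      rw [← Polynomial.map_mul, ← hAB, hmod]
    rcases factor_dvd_pow hmapAB huA with hA | hA
    · exact Or.inl hA
    rcases factor_dvd_pow (by rwa [mul_comm] at hmapAB) huB with hB | hB
    · exact Or.inr hB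
    exfalso
    obtain ⟨eA, heA⟩ := three_dvd_φ hA
    obtain ⟨eB, heB⟩ := three_dvd_φ hB
    have h9 : (3 : GaussianInt) = 9 * (eA * eB) := by
      rw [show (9 : GaussianInt) * (eA * eB) = (3 * eA) * (3 * eB) from by ring,
        ← heA, ← heB, ← map_mul, ← hAB, hval]
    have hdvd9 : ((9:ℤ) : GaussianInt) ∣ ((3:ℤ) : GaussianInt) := by
      push_cast
      exact ⟨eA * eB, h9⟩
    have : (9:ℤ) ∣ 3 := (Zsqrtd.intCast_dvd_intCast _ _).mp hdvd9
    norm_num at this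

end MisAux


end MisAuxSection

/-- For every `m ≥ 2`, `G_{3,m,2}` is irreducible over `ℚ`. -/
theorem misiurewicz_irreducible_three_two (m : ℕ) (hm : 2 ≤ m)
    (G : Polynomial ℤ) (hG : IsMisiurewicz 3 m 2 G) :
    Irreducible (G.map (Int.castRingHom ℚ)) := by
  obtain ⟨j, rfl⟩ : ∃ j, m = j + 1 := ⟨m - 1, by omega⟩
  have hj : 1 ≤ j := by omega
  rcases Nat.even_or_odd j with hje | hjo
  · have h2j : 2 ∣ j := hje.two_dvd
    have hj2 : 2 ≤ j := by obtain ⟨v, rfl⟩ := h2j; omega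
    have hid := MisAux.identity_odd hj h2j hG
    have hmon := MisAux.G_monic_odd hj hid
    have hmod := MisAux.rho_G_odd hj2 hid
    have hval := MisAux.φ_G_odd h2j hj2 hid
    have h3j : 3 ≤ 3 ^ j := Nat.le_self_pow (by omega) 3
    exact MisAux.final hmon (by omega) hmod hval
  · have h2j : ¬ 2 ∣ j := by rw [Nat.odd_iff] at hjo; omega
    have hid := MisAux.identity_even hj h2j hG
    have hmon := MisAux.G_monic_even hj hid
    have hmod := MisAux.rho_G_even hid
    have hval := MisAux.φ_G_even h2j hid
    have h3j : 3 ≤ 3 ^ j := Nat.le_self_pow (by omega) 3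
    exact MisAux.final hmon (by omega) hmod hval
end
end
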